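/- (Hamidoune–Plagne.) Let λ be an integer with λ ∉ {−1, 0, 1}. Then every finite nonempty set A ⊆ ℤ satisfies |A + λ·A| ≥ 3·|A| − 2. -/

import Mathlib

open Pointwise Finset

private lemma hp_aux (l : ℤ) (hl : 2 ≤ (l.natAbs : ℤ)) :
    ∀ d : ℕ, ∀ A : Finset ℤ, ∀ hA : A.Nonempty,
      (A.max' hA - A.min' hA).toNat ≤ d →
      3 * A.card ≤ (A + A.image fun a => l * a).card + 2 := by
  set m : ℤ := (l.natAbs : ℤ) with hm
  have hm0 : 0 < m := by omega
  have hml : m ∣ l := Int.natAbs_dvd.2 dvd_rfl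
  intro d
  induction d using Nat.strong_induction_on with
  | _ d ih =>
    intro A hA hdiam
    have hSne : (A + A.image fun a => l * a).Nonempty := by
      obtain ⟨a, ha⟩ := hA
      exact ⟨a + l * a, add_mem_add ha (mem_image_of_mem _ ha)⟩
    rcases le_or_gt A.card 1 with hcard | hcard
    · have h1 : 1 ≤ (A + A.image fun a => l * a).card := card_pos.2 hSne
      omega
    -- key: residues of sums
    have hres : ∀ a ∈ A, ∀ b ∈ A, (a + l * b) % m = a % m := by
      intro a _ b _
      obtain ⟨k, hk⟩ := hml
      rw [hk, mul_assoc]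
      simp [Int.add_mul_emod_self_left]
    by_cases hsplit : ∃ a ∈ A, ∃ b ∈ A, a % m ≠ b % m
    · -- at least two residue classes
      obtain ⟨a₀, ha₀, b₀, hb₀, hab⟩ := hsplit
      set R := A.image (· % m) with hR
      have hR2 : 2 ≤ R.card := by
        have : ({a₀ % m, b₀ % m} : Finset ℤ) ⊆ R := by
          intro x hx
          simp only [mem_insert, mem_singleton] at hx
          rcases hx with rfl | rfl
          exacts [mem_image_of_mem _ ha₀, mem_image_of_mem _ hb₀]
        calc 2 = ({a₀ % m, b₀ % m} : Finset ℤ).card := (card_pair hab).symm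
        _ ≤ R.card := card_le_card this
      have hcover : (A + A.image fun a => l * a)
          = R.biUnion (fun r => (A.filter (fun a => a % m = r)) + A.image fun a => l * a) := by
        ext x
        simp only [mem_biUnion, mem_add, mem_image, mem_filter]
        constructor
        · rintro ⟨a, ha, z, ⟨b, hb, rfl⟩, rfl⟩
          exact ⟨a % m, mem_image_of_mem _ ha, a, ⟨ha, rfl⟩, l * b, ⟨b, hb, rfl⟩, rfl⟩
        · rintro ⟨r, _, a, ⟨ha, _⟩, z, hz, rfl⟩
          exact ⟨a, ha, z, hz, rfl⟩
      have hdisj : ∀ r ∈ R, ∀ s ∈ R, r ≠ s →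
          Disjoint ((A.filter (fun a => a % m = r)) + A.image fun a => l * a)
            ((A.filter (fun a => a % m = s)) + A.image fun a => l * a) := by
        intro r _ s _ hrs
        rw [disjoint_left]
        rintro x hx hx'
        rw [mem_add] at hx hx'
        obtain ⟨a, ha, z, hz, rfl⟩ := hx
        obtain ⟨a', ha', z', hz', he⟩ := hx'
        rw [mem_filter] at ha ha'
        rw [mem_image] at hz hz'
        obtain ⟨b, hb, rfl⟩ := hz
        obtain ⟨b', hb', rfl⟩ := hz'
        apply hrs
        rw [← ha.2, ← ha'.2, ← hres a ha.1 b hb, ← hres a' ha'.1 b' hb', he]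
      rw [hcover, card_biUnion hdisj]
      have hfib : ∀ r ∈ R, (A.filter (fun a => a % m = r)).Nonempty := by
        intro r hr
        rw [hR, mem_image] at hr
        obtain ⟨a, ha, rfl⟩ := hr
        exact ⟨a, mem_filter.2 ⟨ha, rfl⟩⟩
      have hterm : ∀ r ∈ R, (A.filter (fun a => a % m = r)).card + (A.card - 1)
          ≤ ((A.filter (fun a => a % m = r)) + A.image fun a => l * a).card := by
        intro r hr
        have := cauchy_davenport_add_of_linearOrder_isCancelAdd (hfib r hr)
          (hA.image fun a => l * a)
        have himg : (A.image fun a => l * a).card = A.card :=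
          card_image_of_injective _ (fun x y h => by
            have hl0 : l ≠ 0 := by simpa [hm] using hm0.ne'
            exact mul_left_cancel₀ hl0 h)
        omega
      have hsum : A.card = ∑ r ∈ R, (A.filter (fun a => a % m = r)).card :=
        card_eq_sum_card_fiberwise (fun a ha => mem_image_of_mem _ ha)
      calc 3 * A.card = A.card + 2 * (A.card - 1) + 2 := by omega
      _ ≤ A.card + R.card * (A.card - 1) + 2 := by
          have : 2 * (A.card - 1) ≤ R.card * (A.card - 1) :=
            Nat.mul_le_mul_right _ hR2
          omega
      _ = (∑ r ∈ R, ((A.filter (fun a => a % m = r)).card + (A.card - 1))) + 2 := by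
          rw [sum_add_distrib, sum_const, smul_eq_mul, ← hsum]
      _ ≤ (∑ r ∈ R, ((A.filter (fun a => a % m = r)) + A.image fun a => l * a).card) + 2 :=
          Nat.add_le_add_right (Finset.sum_le_sum hterm) 2
    · -- single residue class: A = m • B + r
      push_neg at hsplit
      set r : ℤ := (A.min' hA) % m with hr
      have hkey : ∀ a ∈ A, a = m * (a / m) + r := by
        intro a ha
        have h1 : a % m = r := hsplit a ha _ (A.min'_mem hA)
        have := Int.mul_ediv_add_emod a m
        omega
      set B := A.image (· / m) with hB
      have hBne : B.Nonempty := hA.image _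
      have hBcard : B.card = A.card := by
        apply card_image_of_injOn
        intro a ha b hb h
        have h' : a / m = b / m := h
        rw [hkey a ha, hkey b hb, h']
      have himg : (A + A.image fun a => l * a)
          = (B + B.image fun b => l * b).image (fun x => m * x + (r + l * r)) := by
        ext x
        simp only [mem_image, mem_add, hB]
        constructor
        · rintro ⟨a, ha, z, ⟨b, hb, rfl⟩, rfl⟩
          refine ⟨a / m + l * (b / m), ⟨a / m, ⟨a, ha, rfl⟩, l * (b / m), ⟨b / m, ⟨b, hb, rfl⟩, rfl⟩, rfl⟩, ?_⟩
          have h1 := hkey a ha; have h2 := hkey b hb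
          calc m * (a / m + l * (b / m)) + (r + l * r)
              = (m * (a / m) + r) + l * (m * (b / m) + r) := by ring
          _ = a + l * b := by rw [← h1, ← h2]
        · rintro ⟨y, ⟨b₁, ⟨a, ha, rfl⟩, z, ⟨b₂, ⟨b, hb, rfl⟩, rfl⟩, rfl⟩, rfl⟩
          refine ⟨a, ha, l * b, ⟨b, hb, rfl⟩, ?_⟩
          have h1 := hkey a ha; have h2 := hkey b hb
          calc a + l * b = (m * (a / m) + r) + l * (m * (b / m) + r) := by rw [← h1, ← h2]
          _ = m * (a / m + l * (b / m)) + (r + l * r) := by ring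
      have hcardeq : (A + A.image fun a => l * a).card
          = (B + B.image fun b => l * b).card := by
        rw [himg]
        apply card_image_of_injective
        intro x y h
        exact mul_left_cancel₀ hm0.ne' (add_right_cancel h)
      -- diameter decreases
      have hminmax : A.min' hA < A.max' hA := A.min'_lt_max'_of_card hcard
      have hBmax : ∀ b ∈ B, b ≤ (A.max' hA) / m := by
        rintro b hb
        rw [hB, mem_image] at hb
        obtain ⟨a, ha, rfl⟩ := hb
        exact Int.ediv_le_ediv hm0 (A.le_max' a ha)
      have hBmin : ∀ b ∈ B, (A.min' hA) / m ≤ b := by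
        rintro b hb
        rw [hB, mem_image] at hb
        obtain ⟨a, ha, rfl⟩ := hb
        exact Int.ediv_le_ediv hm0 (A.min'_le a ha)
      have hDeq : m * ((A.max' hA) / m - (A.min' hA) / m) = A.max' hA - A.min' hA := by
        have h1 := hkey _ (A.max'_mem hA)
        have h2 := hkey _ (A.min'_mem hA)
        have : m * ((A.max' hA) / m) - m * ((A.min' hA) / m) = A.max' hA - A.min' hA := by
          omega
        linarith [this]
      have hX1 : 1 ≤ (A.max' hA) / m - (A.min' hA) / m := by
        by_contra h
        push_neg at h
        have : (A.max' hA) / m - (A.min' hA) / m ≤ 0 := by omega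
        nlinarith
      have hd0 : 1 ≤ d := by
        have : (1 : ℤ) ≤ A.max' hA - A.min' hA := by omega
        omega
      have hBdiam : (B.max' hBne - B.min' hBne).toNat ≤ d - 1 := by
        have h1 : B.max' hBne ≤ (A.max' hA) / m := hBmax _ (B.max'_mem hBne)
        have h2 : (A.min' hA) / m ≤ B.min' hBne := hBmin _ (B.min'_mem hBne)
        have h3 : B.max' hBne - B.min' hBne ≤ (A.max' hA) / m - (A.min' hA) / m := by omega
        have h4 : 2 * ((A.max' hA) / m - (A.min' hA) / m) ≤ A.max' hA - A.min' hA := by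
          nlinarith
        omega
      have := ih (d - 1) (by omega) B hBne hBdiam
      rw [hcardeq, ← hBcard]
      exact this

theorem hamidoune_plagne (l : ℤ) (hl : l ≠ -1 ∧ l ≠ 0 ∧ l ≠ 1)
    (A : Finset ℤ) (hA : A.Nonempty) :
    3 * (A.card : ℤ) - 2 ≤ ((A + A.image fun a => l • a).card : ℤ) := by
  have hl2 : 2 ≤ (l.natAbs : ℤ) := by
    obtain ⟨h1, h2, h3⟩ := hl
    have : 2 ≤ l.natAbs := by omega
    exact_mod_cast this
  have hsmul : (A.image fun a => l • a) = A.image fun a => l * a := by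
    simp [smul_eq_mul]
  have := hp_aux l hl2 (A.max' hA - A.min' hA).toNat A hA le_rfl
  rw [hsmul]
  omega
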